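/- For a polynomial p of degree at most 2 on an interval E and a C^3 function v on E whose nodal interpolant Iv (a quintic polynomial agreeing with v and its first and second derivatives at both endpoints) is given, it holds that ∫_E p · (v - Iv)''' dt = 0; consequently (Iv)''' equals the L^2(E)-orthogonal projection of v''' onto P_2(E). -/

import Mathlib

open Polynomial intervalIntegral

/-- For a polynomial `p` of degree at most 2 on `E = [a,b]` and a `C³` function `v` whose
quintic Hermite-type interpolant `q` agrees with `v`, `v'` and `v''` at both endpoints,
`∫_E p · (v - q)''' = 0`; i.e. `q'''` is the `L²(E)`-orthogonal projection of `v'''`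
onto `P₂(E)`. -/
theorem interpolant_third_deriv_orthogonal
    (a b : ℝ) (hab : a < b) (v : ℝ → ℝ) (hv : ContDiff ℝ 3 v)
    (p q : Polynomial ℝ) (hp : p.degree ≤ 2) (hq : q.degree ≤ 5)
    (h0a : q.eval a = v a) (h0b : q.eval b = v b)
    (h1a : (Polynomial.derivative q).eval a = deriv v a)
    (h1b : (Polynomial.derivative q).eval b = deriv v b)
    (h2a : (Polynomial.derivative (Polynomial.derivative q)).eval a = deriv (deriv v) a)
    (h2b : (Polynomial.derivative (Polynomial.derivative q)).eval b = deriv (deriv v) b) :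
    (∫ t in a..b, p.eval t * iteratedDeriv 3 (fun s => v s - q.eval s) t) = 0 := by
  -- abbreviations
  set q1 := derivative q with hq1
  set q2 := derivative q1 with hq2
  set q3 := derivative q2 with hq3
  set p1 := derivative p with hp1
  set p2 := derivative p1 with hp2
  -- differentiability facts for v
  have hv0 : Differentiable ℝ v := hv.differentiable (by norm_num)
  have hv1 : Differentiable ℝ (deriv v) := by
    have := hv.differentiable_iteratedDeriv 1 (by norm_num)
    simpa [iteratedDeriv_one] using this
  have hv2 : Differentiable ℝ (deriv (deriv v)) := by
    have := hv.differentiable_iteratedDeriv 2 (by norm_num)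
    simpa [iteratedDeriv_succ, iteratedDeriv_one] using this
  have hc3 : Continuous (iteratedDeriv 3 v) := hv.continuous_iteratedDeriv 3 (by norm_num)
  have hd3 : deriv (deriv (deriv v)) = iteratedDeriv 3 v := by
    simp [iteratedDeriv_succ, iteratedDeriv_one]
  -- the error functions
  set f0 : ℝ → ℝ := fun t => v t - q.eval t with hf0
  set f1 : ℝ → ℝ := fun t => deriv v t - q1.eval t with hf1
  set f2 : ℝ → ℝ := fun t => deriv (deriv v) t - q2.eval t with hf2
  set f3 : ℝ → ℝ := fun t => iteratedDeriv 3 v t - q3.eval t with hf3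
  have hD0 : ∀ x : ℝ, HasDerivAt f0 (f1 x) x := fun x =>
    ((hv0 x).hasDerivAt).sub (q.hasDerivAt x)
  have hD1 : ∀ x : ℝ, HasDerivAt f1 (f2 x) x := fun x =>
    ((hv1 x).hasDerivAt).sub (q1.hasDerivAt x)
  have hD2 : ∀ x : ℝ, HasDerivAt f2 (f3 x) x := fun x => by
    have : HasDerivAt (deriv (deriv v)) (iteratedDeriv 3 v x) x := by
      rw [← hd3]; exact (hv2 x).hasDerivAt
    exact this.sub (q2.hasDerivAt x)
  have key : iteratedDeriv 3 f0 = f3 := by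
    have e0 : deriv f0 = f1 := funext fun x => (hD0 x).deriv
    have e1 : deriv f1 = f2 := funext fun x => (hD1 x).deriv
    have e2 : deriv f2 = f3 := funext fun x => (hD2 x).deriv
    simp only [iteratedDeriv_succ, iteratedDeriv_zero, e0, e1, e2]
  -- continuity / integrability
  have hcf1 : Continuous f1 := (hv1.continuous).sub q1.continuous_aeval
  have hcf2 : Continuous f2 := (hv2.continuous).sub q2.continuous_aeval
  have hcf3 : Continuous f3 := hc3.sub q3.continuous_aeval
  -- boundary values vanish
  have hf0a : f0 a = 0 := by simp [hf0, h0a]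
  have hf0b : f0 b = 0 := by simp [hf0, h0b]
  have hf1a : f1 a = 0 := by simp [hf1, h1a]
  have hf1b : f1 b = 0 := by simp [hf1, h1b]
  have hf2a : f2 a = 0 := by simp [hf2, h2a]
  have hf2b : f2 b = 0 := by simp [hf2, h2b]
  -- p''' = 0
  have hp3 : derivative p2 = 0 := by
    have hnd : p.natDegree < 3 := by
      have h2 : p.natDegree ≤ 2 := Polynomial.natDegree_le_iff_degree_le.mpr (by exact_mod_cast hp)
      omega
    have : derivative^[3] p = 0 := Polynomial.iterate_derivative_eq_zero hnd
    simpa [hp2, hp1, Function.iterate_succ_apply'] using this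
  -- integration by parts, step 3 (innermost)
  have step3 : (∫ t in a..b, p2.eval t * f1 t) = 0 := by
    have := intervalIntegral.integral_mul_deriv_eq_deriv_mul
      (u := fun t => p2.eval t) (u' := fun t => (derivative p2).eval t)
      (v := f0) (v' := f1)
      (fun x _ => p2.hasDerivAt x) (fun x _ => hD0 x)
      ((p2.derivative.continuous_aeval).intervalIntegrable a b)
      (hcf1.intervalIntegrable a b)
    rw [this, hf0a, hf0b, hp3]
    simp
  -- step 2
  have step2 : (∫ t in a..b, p1.eval t * f2 t) = 0 := by
    have := intervalIntegral.integral_mul_deriv_eq_deriv_mul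
      (u := fun t => p1.eval t) (u' := fun t => p2.eval t)
      (v := f1) (v' := f2)
      (fun x _ => p1.hasDerivAt x) (fun x _ => hD1 x)
      ((p2.continuous_aeval).intervalIntegrable a b)
      (hcf2.intervalIntegrable a b)
    rw [this, hf1a, hf1b, step3]
    simp
  -- step 1
  have step1 : (∫ t in a..b, p.eval t * f3 t) = 0 := by
    have := intervalIntegral.integral_mul_deriv_eq_deriv_mul
      (u := fun t => p.eval t) (u' := fun t => p1.eval t)
      (v := f2) (v' := f3)
      (fun x _ => p.hasDerivAt x) (fun x _ => hD2 x)
      ((p1.continuous_aeval).intervalIntegrable a b)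
      (hcf3.intervalIntegrable a b)
    rw [this, hf2a, hf2b, step2]
    simp
  calc (∫ t in a..b, p.eval t * iteratedDeriv 3 f0 t)
      = ∫ t in a..b, p.eval t * f3 t := by rw [key]
    _ = 0 := step1
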